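/- arXiv:2011.09680 — 2 statements merged into one kernel-verified Lean document; each statement's English description precedes it below -/
import Mathlib

section
/- Suppose β > 1, h < 0, and on the interval J = [−h − √(h²−2c), −h + √(h²−2c)] (with c < h²/2) one has m > tanh((m+h)/(f((E(m)−c)_+)+ε)) for all m ∈ J, while outside J the modified free energy derivative agrees with g'(m) = arctanh(m) − β(m+h). If additionally g' > 0 on (−1,1) \ J to the right of J and g has a unique zero of g' at m₋* < inf J, then m₋* is the unique stationary point of the modified free energy g_f on (−1,1), and it is the global minimum. -/
lemma tanh_formula (x : ℝ) :
    Real.tanh x = (Real.exp (2 * x) - 1) / (Real.exp (2 * x) + 1) := by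
  have h2 : Real.exp (2 * x) = Real.exp x * Real.exp x := by
    rw [← Real.exp_add]; ring_nf
  have hx := Real.exp_pos x
  rw [Real.tanh_eq_sinh_div_cosh, Real.sinh_eq, Real.cosh_eq, Real.exp_neg, h2]
  have h1 : 0 < Real.exp x * Real.exp x + 1 := by positivity
  field_simp

lemma tanh_strictMono : StrictMono Real.tanh := by
  intro x y hxy
  rw [tanh_formula, tanh_formula]
  have hx := Real.exp_pos (2 * x)
  have hy := Real.exp_pos (2 * y)
  have hlt : Real.exp (2 * x) < Real.exp (2 * y) := by
    apply Real.exp_lt_exp.2; linarith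
  rw [div_lt_div_iff₀ (by linarith) (by linarith)]
  nlinarith

lemma tanh_half_log (m : ℝ) (h1 : -1 < m) (h2 : m < 1) :
    Real.tanh (Real.log ((1 + m) / (1 - m)) / 2) = m := by
  rw [tanh_formula]
  have h3 : 2 * (Real.log ((1 + m) / (1 - m)) / 2) = Real.log ((1 + m) / (1 - m)) := by ring
  rw [h3, Real.exp_log (div_pos (by linarith) (by linarith))]
  have h4 : (1 : ℝ) - m ≠ 0 := by linarith
  field_simp
  ring


/-- Theorem 3.1(1), convexification: suppose `β > 1`, `h < 0`,
`ε = 1/β`, `c < h²/2`, and on `J = [−h − √(h²−2c), −h + √(h²−2c)]` one has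
`m > tanh((m+h)/(f((E(m)−c)_+)+ε))` (i.e. the modified derivative
`g_f'(m) = arctanh(m) − (m+h)/(f((E(m)−c)_+)+ε)` is positive on `J`), while outside `J`
`g_f'` agrees with `g'(m) = arctanh(m) − β(m+h)`, which is positive to the right of `J`,
negative left of its unique zero `mstar* < inf J` and positive between `mstar*` and `J`.
Then `mstar*` is the unique stationary point of `g_f` on `(−1,1)` and its global minimum. -/
theorem stmt15 (h ε β c : ℝ) (hβ1 : 1 < β) (hh : h < 0) (hε : ε = 1 / β)
    (hc : c < h ^ 2 / 2)
    (f : ℝ → ℝ) (hf_cont : Continuous f) (hf_mono : MonotoneOn f (Set.Ici (0 : ℝ)))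
    (hf_nonneg : ∀ u, 0 ≤ u → 0 ≤ f u) (hf0 : f 0 = 0)
    (E I gf gf' : ℝ → ℝ)
    (hE : ∀ m, E m = -m ^ 2 / 2 - h * m)
    (hI : ∀ m, I m =
      (1 + m) * Real.log (1 + m) / 2 + (1 - m) * Real.log (1 - m) / 2)
    (hgf' : ∀ m, gf' m =
      Real.log ((1 + m) / (1 - m)) / 2 - (m + h) / (f (max (E m - c) 0) + ε))
    (hderiv : ∀ m ∈ Set.Ioo (-1 : ℝ) 1, HasDerivAt gf (gf' m) m)
    (J : Set ℝ)
    (hJ : J = Set.Icc (-h - Real.sqrt (h ^ 2 - 2 * c)) (-h + Real.sqrt (h ^ 2 - 2 * c)))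
    (hposJ : ∀ m ∈ J ∩ Set.Ioo (-1 : ℝ) 1,
      Real.tanh ((m + h) / (f (max (E m - c) 0) + ε)) < m)
    (houtside : ∀ m ∈ Set.Ioo (-1 : ℝ) 1 \ J,
      gf' m = Real.log ((1 + m) / (1 - m)) / 2 - β * (m + h))
    (hright : ∀ m ∈ Set.Ioo (-1 : ℝ) 1,
      -h + Real.sqrt (h ^ 2 - 2 * c) < m →
        0 < Real.log ((1 + m) / (1 - m)) / 2 - β * (m + h))
    (mstar : ℝ) (hmstarmem : mstar ∈ Set.Ioo (-1 : ℝ) 1)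
    (hmstarJ : mstar < -h - Real.sqrt (h ^ 2 - 2 * c))
    (hmstarzero : Real.log ((1 + mstar) / (1 - mstar)) / 2 - β * (mstar + h) = 0)
    (hleft : ∀ m ∈ Set.Ioo (-1 : ℝ) 1, m < mstar →
      Real.log ((1 + m) / (1 - m)) / 2 - β * (m + h) < 0)
    (hmid : ∀ m ∈ Set.Ioo (-1 : ℝ) 1, mstar < m → m < -h - Real.sqrt (h ^ 2 - 2 * c) →
      0 < Real.log ((1 + m) / (1 - m)) / 2 - β * (m + h)) :
    (∀ m ∈ Set.Ioo (-1 : ℝ) 1, gf' m = 0 ↔ m = mstar) ∧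
      ∀ m ∈ Set.Ioo (-1 : ℝ) 1, gf mstar ≤ gf m := by
  set a := -h - Real.sqrt (h ^ 2 - 2 * c) with ha
  set b := -h + Real.sqrt (h ^ 2 - 2 * c) with hb
  have hsqrt : 0 ≤ Real.sqrt (h ^ 2 - 2 * c) := Real.sqrt_nonneg _
  have hab : a ≤ b := by rw [ha, hb]; linarith
  -- mstar is outside J
  have hmstar_notJ : mstar ∉ J := by
    rw [hJ]; intro hmem; exact absurd hmem.1 (not_le.2 hmstarJ)
  have hzero : gf' mstar = 0 := by
    rw [houtside mstar ⟨hmstarmem, hmstar_notJ⟩, hmstarzero]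
  -- sign of gf' to the right of mstar
  have hpos : ∀ m ∈ Set.Ioo (-1 : ℝ) 1, mstar < m → 0 < gf' m := by
    intro m hm hmm
    by_cases hmJ : m ∈ J
    · have htanh := hposJ m ⟨hmJ, hm⟩
      rw [hgf']
      have hkey : (m + h) / (f (max (E m - c) 0) + ε)
          < Real.log ((1 + m) / (1 - m)) / 2 := by
        have := tanh_half_log m hm.1 hm.2
        have hlt : Real.tanh ((m + h) / (f (max (E m - c) 0) + ε))
            < Real.tanh (Real.log ((1 + m) / (1 - m)) / 2) := by
          rw [this]; exact htanh
        exact tanh_strictMono.lt_iff_lt.mp hlt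
      linarith
    · rw [houtside m ⟨hm, hmJ⟩]
      rw [hJ, Set.mem_Icc, not_and_or, not_le, not_le] at hmJ
      rcases hmJ with hlt | hgt
      · exact hmid m hm hmm hlt
      · exact hright m hm hgt
  -- sign of gf' to the left of mstar
  have hneg : ∀ m ∈ Set.Ioo (-1 : ℝ) 1, m < mstar → gf' m < 0 := by
    intro m hm hmm
    have hmJ : m ∉ J := by
      rw [hJ]; intro hmem; have := hmem.1; linarith
    rw [houtside m ⟨hm, hmJ⟩]
    exact hleft m hm hmm
  constructor
  · intro m hm
    constructor
    · intro h0
      rcases lt_trichotomy m mstar with hlt | heq | hgt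
      · exact absurd h0 (ne_of_lt (hneg m hm hlt))
      · exact heq
      · exact absurd h0 (ne_of_gt (hpos m hm hgt))
    · rintro rfl; exact hzero
  · intro m hm
    have hcont : ∀ s : Set ℝ, s ⊆ Set.Ioo (-1 : ℝ) 1 → ContinuousOn gf s := by
      intro s hs x hx
      exact ((hderiv x (hs hx)).continuousAt).continuousWithinAt
    rcases lt_trichotomy m mstar with hlt | heq | hgt
    · have hsub : Set.Icc m mstar ⊆ Set.Ioo (-1 : ℝ) 1 := fun x hx =>
        ⟨lt_of_lt_of_le hm.1 hx.1, lt_of_le_of_lt hx.2 hmstarmem.2⟩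
      have hanti : StrictAntiOn gf (Set.Icc m mstar) := by
        apply strictAntiOn_of_deriv_neg (convex_Icc m mstar) (hcont _ hsub)
        intro x hx
        rw [interior_Icc] at hx
        have hx' : x ∈ Set.Ioo (-1 : ℝ) 1 := hsub (Set.Ioo_subset_Icc_self hx)
        rw [(hderiv x hx').deriv]
        exact hneg x hx' hx.2
      exact le_of_lt (hanti (Set.left_mem_Icc.2 hlt.le) (Set.right_mem_Icc.2 hlt.le) hlt)
    · rw [heq]
    · have hsub : Set.Icc mstar m ⊆ Set.Ioo (-1 : ℝ) 1 := fun x hx =>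
        ⟨lt_of_lt_of_le hmstarmem.1 hx.1, lt_of_le_of_lt hx.2 hm.2⟩
      have hmono : StrictMonoOn gf (Set.Icc mstar m) := by
        apply strictMonoOn_of_deriv_pos (convex_Icc mstar m) (hcont _ hsub)
        intro x hx
        rw [interior_Icc] at hx
        have hx' : x ∈ Set.Ioo (-1 : ℝ) 1 := hsub (Set.Ioo_subset_Icc_self hx)
        rw [(hderiv x hx').deriv]
        exact hpos x hx' hx.1
      exact le_of_lt (hmono (Set.left_mem_Icc.2 hgt.le) (Set.right_mem_Icc.2 hgt.le) hgt)
end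

section
/- Let μ be a probability measure on a finite set X with S ⊆ X the set of global minimizers of H, d̲ := min{H(x) : H(x) > H_min}, and let π_t(x) ∝ exp(−H^f_{ε_t,c}(x)) μ(x). If c ≥ d̲ then π_t(X \ S) ≤ (1/μ(S)) · exp(−β_t (d̲ − H_min)), where β_t = 1/ε_t. -/
/-- for the modified Gibbs measure `π_t(x) ∝ exp(−H^f_{ε_t,c}(x)) μ(x)`
with `S = argmin H`, second-lowest energy value `d̲`, and `c ≥ d̲`:
`π_t(X \ S) ≤ (1/μ(S)) · exp(−β_t (d̲ − H_min))`, where `β_t = 1/ε_t`. -/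
theorem stmt19 {X : Type*} [Fintype X] [Nonempty X] [DecidableEq X] (H : X → ℝ) (μ : X → ℝ)
    (hμpos : ∀ x, 0 < μ x) (hμsum : ∑ x, μ x = 1)
    (Hmin : ℝ) (hHmin : IsLeast (Set.range H) Hmin)
    (S : Finset X) (hS : ∀ x, x ∈ S ↔ H x = Hmin)
    (hnotconst : ∃ x, Hmin < H x)
    (dlow : ℝ) (hdlow : IsLeast {v | ∃ x, H x = v ∧ Hmin < v} dlow)
    (f : ℝ → ℝ) (hf_mono : MonotoneOn f (Set.Ici (0 : ℝ)))
    (hf_nonneg : ∀ u, 0 ≤ u → 0 ≤ f u) (hf0 : f 0 = 0)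
    (εt βt c : ℝ) (hεt : 0 < εt) (hβt : βt = 1 / εt) (hc : dlow ≤ c)
    (Hf : X → ℝ)
    (hHf : ∀ x, Hf x = ∫ u in Hmin..(H x), 1 / (f (max (u - c) 0) + εt)) :
    (∑ x ∈ Sᶜ, Real.exp (-Hf x) * μ x) / (∑ x, Real.exp (-Hf x) * μ x) ≤
      (1 / ∑ x ∈ S, μ x) * Real.exp (-βt * (dlow - Hmin)) := by
  obtain ⟨x0, hx0⟩ := hHmin.1
  have hx0S : x0 ∈ S := (hS x0).2 hx0
  have hlb : ∀ x, Hmin ≤ H x := fun x => hHmin.2 ⟨x, rfl⟩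
  obtain ⟨y, hy, hylt⟩ := hdlow.1
  have hdpos : Hmin < dlow := hy ▸ hylt
  set φ : ℝ → ℝ := fun u => 1 / (f (max (u - c) 0) + εt) with hφdef
  have hden : ∀ u : ℝ, 0 < f (max (u - c) 0) + εt := fun u =>
    add_pos_of_nonneg_of_pos (hf_nonneg _ (le_max_right _ _)) hεt
  have hφpos : ∀ u, 0 < φ u := fun u => div_pos one_pos (hden u)
  have hφanti : Antitone φ := by
    intro u v huv
    apply one_div_le_one_div_of_le (hden u)
    exact add_le_add_left
      (hf_mono (Set.mem_Ici.mpr (le_max_right _ _)) (Set.mem_Ici.mpr (le_max_right _ _))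
        (max_le_max (sub_le_sub_right huv c) le_rfl)) εt
  have hint : ∀ a b : ℝ, IntervalIntegrable φ MeasureTheory.volume a b := fun a b =>
    hφanti.intervalIntegrable
  -- value on S
  have hHfS : ∀ x ∈ S, Hf x = 0 := by
    intro x hx
    rw [hHf x, (hS x).1 hx, intervalIntegral.integral_same]
  -- key bound off S
  have hHfB : ∀ x ∉ S, βt * (dlow - Hmin) ≤ Hf x := by
    intro x hx
    have hlt : Hmin < H x :=
      lt_of_le_of_ne (hlb x) (fun h => hx ((hS x).2 h.symm))
    have h1 : dlow ≤ H x := hdlow.2 ⟨x, rfl, hlt⟩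
    have h2 : (∫ u in Hmin..dlow, φ u) ≤ ∫ u in Hmin..(H x), φ u :=
      intervalIntegral.integral_mono_interval le_rfl hdpos.le h1
        (MeasureTheory.ae_of_all _ fun u => (hφpos u).le) (hint _ _)
    have h3 : (∫ u in Hmin..dlow, φ u) = ∫ u in Hmin..dlow, (1 / εt : ℝ) := by
      apply intervalIntegral.integral_congr
      intro u hu
      rw [Set.uIcc_of_le hdpos.le] at hu
      have : max (u - c) 0 = 0 := max_eq_right (by linarith [hu.2])
      simp [hφdef, this, hf0]
    have h4 : (∫ u in Hmin..dlow, (1 / εt : ℝ)) = βt * (dlow - Hmin) := by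
      rw [intervalIntegral.integral_const, smul_eq_mul, hβt]; ring
    rw [hHf x]
    calc βt * (dlow - Hmin) = ∫ u in Hmin..dlow, φ u := by rw [h3, h4]
      _ ≤ _ := h2
  have hSpos : 0 < ∑ x ∈ S, μ x :=
    Finset.sum_pos' (fun x _ => (hμpos x).le) ⟨x0, hx0S, hμpos x0⟩
  have hterm_nonneg : ∀ x : X, 0 ≤ Real.exp (-Hf x) * μ x := fun x =>
    mul_nonneg (Real.exp_pos _).le (hμpos x).le
  have hdenom : (∑ x ∈ S, μ x) ≤ ∑ x, Real.exp (-Hf x) * μ x := by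
    calc (∑ x ∈ S, μ x) = ∑ x ∈ S, Real.exp (-Hf x) * μ x := by
          apply Finset.sum_congr rfl
          intro x hx
          rw [hHfS x hx, neg_zero, Real.exp_zero, one_mul]
      _ ≤ ∑ x, Real.exp (-Hf x) * μ x :=
          Finset.sum_le_sum_of_subset_of_nonneg (Finset.subset_univ S)
            (fun x _ _ => hterm_nonneg x)
  have hnum : (∑ x ∈ Sᶜ, Real.exp (-Hf x) * μ x) ≤ Real.exp (-βt * (dlow - Hmin)) := by
    calc (∑ x ∈ Sᶜ, Real.exp (-Hf x) * μ x)
        ≤ ∑ x ∈ Sᶜ, Real.exp (-βt * (dlow - Hmin)) * μ x := by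
          apply Finset.sum_le_sum
          intro x hx
          have := hHfB x (Finset.mem_compl.mp hx)
          exact mul_le_mul_of_nonneg_right (Real.exp_le_exp.mpr (by linarith)) (hμpos x).le
      _ = Real.exp (-βt * (dlow - Hmin)) * ∑ x ∈ Sᶜ, μ x := by
          rw [Finset.mul_sum]
      _ ≤ Real.exp (-βt * (dlow - Hmin)) * 1 := by
          apply mul_le_mul_of_nonneg_left _ (Real.exp_pos _).le
          rw [← hμsum]
          exact Finset.sum_le_sum_of_subset_of_nonneg (Finset.subset_univ _)
            (fun x _ _ => (hμpos x).le)
      _ = Real.exp (-βt * (dlow - Hmin)) := mul_one _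
  have hnum_nonneg : 0 ≤ ∑ x ∈ Sᶜ, Real.exp (-Hf x) * μ x :=
    Finset.sum_nonneg fun x _ => hterm_nonneg x
  calc (∑ x ∈ Sᶜ, Real.exp (-Hf x) * μ x) / (∑ x, Real.exp (-Hf x) * μ x)
      ≤ (∑ x ∈ Sᶜ, Real.exp (-Hf x) * μ x) / (∑ x ∈ S, μ x) :=
        div_le_div_of_nonneg_left hnum_nonneg hSpos hdenom
    _ ≤ Real.exp (-βt * (dlow - Hmin)) / (∑ x ∈ S, μ x) :=
        by gcongr
    _ = (1 / ∑ x ∈ S, μ x) * Real.exp (-βt * (dlow - Hmin)) := by ring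
end
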